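/- arXiv:2505.24460 — 2 statements merged into one kernel-verified Lean document; each statement's English description precedes it below -/
import Mathlib

section
/- Fix k > 0, ρ ∈ (0,1), and constants c₁ > 0 and c₂ > 0. Then there exists a unique pair (t*, p*) ∈ ℝ × ℝ satisfying the activation condition g_{k,ρ}(ρ·t* − p*) = c₁ and the free-entry condition ℋ(p*, t*) = 0; moreover, t* is the unique global maximizer of the function t ↦ ℋ(p*, t). -/
open MeasureTheory Real Set

/-- Standard normal density. -/
noncomputable def stdPhi (x : ℝ) : ℝ := (Real.sqrt (2 * Real.pi))⁻¹ * Real.exp (-x ^ 2 / 2)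
/-- Standard normal CDF. -/
noncomputable def stdPhiCDF (x : ℝ) : ℝ := ∫ u in Set.Iic x, stdPhi u

lemma stdPhi_pos (x : ℝ) : 0 < stdPhi x := by
  unfold stdPhi
  positivity

lemma stdPhi_cont : Continuous stdPhi := by
  unfold stdPhi; fun_prop

lemma stdPhi_integrable : Integrable stdPhi := by
  have h : Integrable (fun x : ℝ => Real.exp (-(1/2 : ℝ) * x ^ 2)) := integrable_exp_neg_mul_sq (by norm_num)
  have := h.const_mul (Real.sqrt (2 * Real.pi))⁻¹
  convert this using 2 with x
  unfold stdPhi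
  ring_nf

lemma integral_stdPhi : ∫ x, stdPhi x = 1 := by
  unfold stdPhi
  rw [integral_const_mul]
  have : ∀ x : ℝ, Real.exp (-x ^ 2 / 2) = Real.exp (-(1/2 : ℝ) * x ^ 2) := by intro x; ring_nf
  simp_rw [this, integral_gaussian]
  rw [show (Real.pi / (1/2)) = 2 * Real.pi by ring]
  rw [inv_mul_cancel₀]
  positivity

lemma stdPhiCDF_le_one (x : ℝ) : stdPhiCDF x ≤ 1 := by
  rw [← integral_stdPhi]
  exact setIntegral_le_integral stdPhi_integrable
    (Filter.Eventually.of_forall fun u => (stdPhi_pos u).le)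

lemma stdPhiCDF_nonneg (x : ℝ) : 0 ≤ stdPhiCDF x :=
  setIntegral_nonneg measurableSet_Iic fun u _ => (stdPhi_pos u).le

lemma stdPhiCDF_eq (x : ℝ) : stdPhiCDF x = stdPhiCDF 0 + ∫ u in (0:ℝ)..x, stdPhi u := by
  have := intervalIntegral.integral_Iic_sub_Iic (f := stdPhi) (μ := volume)
    (stdPhi_integrable.integrableOn (s := Iic 0)) (stdPhi_integrable.integrableOn (s := Iic x))
  unfold stdPhiCDF
  linarith [this]

lemma stdPhiCDF_hasDerivAt (x : ℝ) : HasDerivAt stdPhiCDF (stdPhi x) x := by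
  have h : HasDerivAt (fun y => ∫ u in (0:ℝ)..y, stdPhi u) (stdPhi x) x :=
    intervalIntegral.integral_hasDerivAt_right
      (stdPhi_cont.intervalIntegrable 0 x)
      (stdPhi_cont.stronglyMeasurableAtFilter _ _)
      stdPhi_cont.continuousAt
  have : HasDerivAt (fun y => stdPhiCDF 0 + ∫ u in (0:ℝ)..y, stdPhi u) (stdPhi x) x :=
    h.const_add _
  have heq : stdPhiCDF = fun y => stdPhiCDF 0 + ∫ u in (0:ℝ)..y, stdPhi u :=
    funext fun y => stdPhiCDF_eq y
  rw [heq]; exact this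

lemma stdPhiCDF_cont : Continuous stdPhiCDF :=
  continuous_iff_continuousAt.2 fun x => (stdPhiCDF_hasDerivAt x).continuousAt

lemma stdPhiCDF_strictMono : StrictMono stdPhiCDF :=
  strictMono_of_deriv_pos (fun x => by
    rw [(stdPhiCDF_hasDerivAt x).deriv]; exact stdPhi_pos x)

lemma stdPhi_le (u : ℝ) : stdPhi u ≤ (Real.sqrt (2 * Real.pi))⁻¹ * Real.exp (1/2) * Real.exp u := by
  unfold stdPhi
  rw [mul_assoc, ← Real.exp_add]
  have : -u ^ 2 / 2 ≤ 1/2 + u := by nlinarith [sq_nonneg (u + 1)]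
  have h2 : (0:ℝ) < (Real.sqrt (2 * Real.pi))⁻¹ := by positivity
  exact mul_le_mul_of_nonneg_left (Real.exp_le_exp.2 this) h2.le

lemma stdPhiCDF_tendsto_atBot : Filter.Tendsto stdPhiCDF Filter.atBot (nhds 0) := by
  have hb : ∀ x : ℝ, stdPhiCDF x ≤ (Real.sqrt (2 * Real.pi))⁻¹ * Real.exp (1/2) * Real.exp x := by
    intro x
    calc stdPhiCDF x ≤ ∫ u in Iic x, (Real.sqrt (2 * Real.pi))⁻¹ * Real.exp (1/2) * Real.exp u := by
          refine setIntegral_mono_on (stdPhi_integrable.integrableOn) ?_ measurableSet_Iic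
            (fun u _ => stdPhi_le u)
          exact ((integrableOn_exp_Iic x).const_mul _)
      _ = (Real.sqrt (2 * Real.pi))⁻¹ * Real.exp (1/2) * Real.exp x := by
          rw [integral_const_mul, integral_exp_Iic]
  have h0 : Filter.Tendsto (fun x : ℝ => (Real.sqrt (2 * Real.pi))⁻¹ * Real.exp (1/2) * Real.exp x)
      Filter.atBot (nhds 0) := by
    have := Real.tendsto_exp_atBot.const_mul ((Real.sqrt (2 * Real.pi))⁻¹ * Real.exp (1/2))
    simpa using this
  refine squeeze_zero (fun x => stdPhiCDF_nonneg x) hb h0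

lemma stdPhiCDF_pos (x : ℝ) : 0 < stdPhiCDF x :=
  lt_of_le_of_lt (stdPhiCDF_nonneg (x - 1)) (stdPhiCDF_strictMono (by linarith))

/-- Normalized expected-profit function `g_{k,ρ}`. -/
noncomputable def gkr (k ρ x : ℝ) : ℝ :=
  Real.exp (k * x + k ^ 2 * (1 - ρ ^ 2) / 2) *
      stdPhiCDF ((x + k * (1 - ρ ^ 2)) / Real.sqrt (1 - ρ ^ 2)) -
    stdPhiCDF (x / Real.sqrt (1 - ρ ^ 2))

variable {k ρ : ℝ}

lemma hs_pos (hρ : ρ ∈ Set.Ioo (0:ℝ) 1) : 0 < 1 - ρ ^ 2 := by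
  have h1 := hρ.1; have h2 := hρ.2; nlinarith

lemma hσ_pos (hρ : ρ ∈ Set.Ioo (0:ℝ) 1) : 0 < Real.sqrt (1 - ρ ^ 2) :=
  Real.sqrt_pos.2 (hs_pos hρ)

lemma gkr_key (hρ : ρ ∈ Set.Ioo (0:ℝ) 1) (x : ℝ) :
    Real.exp (k * x + k ^ 2 * (1 - ρ ^ 2) / 2) *
      stdPhi ((x + k * (1 - ρ ^ 2)) / Real.sqrt (1 - ρ ^ 2)) =
    stdPhi (x / Real.sqrt (1 - ρ ^ 2)) := by
  have hσ := hσ_pos hρ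
  have hsq : Real.sqrt (1 - ρ ^ 2) ^ 2 = 1 - ρ ^ 2 := Real.sq_sqrt (hs_pos hρ).le
  unfold stdPhi
  rw [mul_comm (Real.exp _), mul_assoc, ← Real.exp_add]
  congr 1
  field_simp
  rw [hsq]
  ring

lemma gkr_hasDerivAt (hρ : ρ ∈ Set.Ioo (0:ℝ) 1) (x : ℝ) :
    HasDerivAt (gkr k ρ)
      (k * (Real.exp (k * x + k ^ 2 * (1 - ρ ^ 2) / 2) *
        stdPhiCDF ((x + k * (1 - ρ ^ 2)) / Real.sqrt (1 - ρ ^ 2)))) x := by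
  have hσ := hσ_pos hρ
  set σ := Real.sqrt (1 - ρ ^ 2) with hσdef
  have h1 : HasDerivAt (fun y => Real.exp (k * y + k ^ 2 * (1 - ρ ^ 2) / 2))
      (k * Real.exp (k * x + k ^ 2 * (1 - ρ ^ 2) / 2)) x := by
    have h : HasDerivAt (fun y : ℝ => k * y + k ^ 2 * (1 - ρ ^ 2) / 2) k x := by
      simpa using ((hasDerivAt_id x).const_mul k).add_const (k ^ 2 * (1 - ρ ^ 2) / 2)
    simpa [mul_comm] using h.exp
  have h2 : HasDerivAt (fun y => stdPhiCDF ((y + k * (1 - ρ ^ 2)) / σ))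
      (stdPhi ((x + k * (1 - ρ ^ 2)) / σ) * σ⁻¹) x := by
    have hin : HasDerivAt (fun y : ℝ => (y + k * (1 - ρ ^ 2)) / σ) σ⁻¹ x := by
      simpa [div_eq_mul_inv] using ((hasDerivAt_id x).add_const (k * (1 - ρ ^ 2))).mul_const σ⁻¹
    exact (stdPhiCDF_hasDerivAt _).comp x hin
  have h3 : HasDerivAt (fun y => stdPhiCDF (y / σ)) (stdPhi (x / σ) * σ⁻¹) x := by
    have hin : HasDerivAt (fun y : ℝ => y / σ) σ⁻¹ x := by
      simpa [div_eq_mul_inv] using (hasDerivAt_id x).mul_const σ⁻¹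
    exact (stdPhiCDF_hasDerivAt _).comp x hin
  have h4 := ((h1.mul h2).sub h3)
  have key := gkr_key hρ (k := k) x
  refine h4.congr_deriv ?_
  rw [← key]
  ring

lemma gkr_strictMono (hk : 0 < k) (hρ : ρ ∈ Set.Ioo (0:ℝ) 1) : StrictMono (gkr k ρ) :=
  strictMono_of_deriv_pos (fun x => by
    rw [(gkr_hasDerivAt hρ x).deriv]
    exact mul_pos hk (mul_pos (Real.exp_pos _)
      (stdPhiCDF_pos ((x + k * (1 - ρ ^ 2)) / Real.sqrt (1 - ρ ^ 2)))))

lemma gkr_cont : Continuous (gkr k ρ) := by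
  unfold gkr
  exact ((Real.continuous_exp.comp (by fun_prop)).mul
    (stdPhiCDF_cont.comp (by fun_prop))).sub (stdPhiCDF_cont.comp (by fun_prop))

lemma gkr_tendsto_atBot (hk : 0 < k) (hρ : ρ ∈ Set.Ioo (0:ℝ) 1) : Filter.Tendsto (gkr k ρ) Filter.atBot (nhds 0) := by
  have hσ := hσ_pos hρ
  have hA : Filter.Tendsto (fun x => Real.exp (k * x + k ^ 2 * (1 - ρ ^ 2) / 2) *
      stdPhiCDF ((x + k * (1 - ρ ^ 2)) / Real.sqrt (1 - ρ ^ 2))) Filter.atBot (nhds 0) := by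
    have he : Filter.Tendsto (fun x : ℝ => Real.exp (k * x + k ^ 2 * (1 - ρ ^ 2) / 2))
        Filter.atBot (nhds 0) := by
      apply Real.tendsto_exp_atBot.comp
      exact Filter.tendsto_atBot_add_const_right _ _
        ((Filter.tendsto_const_mul_atBot_of_pos hk).2 Filter.tendsto_id)
    have hb : ∀ x : ℝ, |Real.exp (k * x + k ^ 2 * (1 - ρ ^ 2) / 2) *
        stdPhiCDF ((x + k * (1 - ρ ^ 2)) / Real.sqrt (1 - ρ ^ 2))|
        ≤ Real.exp (k * x + k ^ 2 * (1 - ρ ^ 2) / 2) := by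
      intro x
      rw [abs_of_nonneg (mul_nonneg (Real.exp_pos _).le (stdPhiCDF_nonneg _))]
      nth_rewrite 2 [← mul_one (Real.exp _)]
      exact mul_le_mul_of_nonneg_left (stdPhiCDF_le_one _) (Real.exp_pos _).le
    exact squeeze_zero_norm hb he
  have hB : Filter.Tendsto (fun x => stdPhiCDF (x / Real.sqrt (1 - ρ ^ 2)))
      Filter.atBot (nhds 0) := by
    apply stdPhiCDF_tendsto_atBot.comp
    exact Filter.tendsto_id.atBot_div_const hσ
  have h := hA.sub hB; rw [sub_zero] at h; exact h

lemma gkr_pos (hk : 0 < k) (hρ : ρ ∈ Set.Ioo (0:ℝ) 1) (x : ℝ) : 0 < gkr k ρ x := by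
  have h1 : 0 ≤ gkr k ρ (x - 1) := by
    refine le_of_tendsto (gkr_tendsto_atBot hk hρ) ?_
    filter_upwards [Filter.eventually_le_atBot (x - 1)] with y hy
    exact ((gkr_strictMono hk hρ).le_iff_le).2 hy
  exact lt_of_le_of_lt h1 (gkr_strictMono hk hρ (by linarith))

lemma gkr_lower (hk : 0 < k) (hρ : ρ ∈ Set.Ioo (0:ℝ) 1) (x : ℝ) (hx : 0 ≤ x) :
    Real.exp (k * x) * stdPhiCDF 0 - 1 ≤ gkr k ρ x := by
  unfold gkr
  have h1 : stdPhiCDF (x / Real.sqrt (1 - ρ ^ 2)) ≤ 1 := stdPhiCDF_le_one _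
  have h2 : stdPhiCDF 0 ≤ stdPhiCDF ((x + k * (1 - ρ ^ 2)) / Real.sqrt (1 - ρ ^ 2)) := by
    apply (stdPhiCDF_strictMono.le_iff_le).2
    have := hσ_pos hρ
    have hnum : 0 ≤ x + k * (1 - ρ ^ 2) := by nlinarith [hs_pos hρ]
    positivity
  have h3 : Real.exp (k * x) ≤ Real.exp (k * x + k ^ 2 * (1 - ρ ^ 2) / 2) := by
    apply Real.exp_le_exp.2
    nlinarith [hs_pos hρ, sq_nonneg k]
  nlinarith [stdPhiCDF_pos (0:ℝ), Real.exp_pos (k * x), stdPhiCDF_le_one (0:ℝ),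
    stdPhiCDF_nonneg ((x + k * (1 - ρ ^ 2)) / Real.sqrt (1 - ρ ^ 2))]

lemma gkr_tendsto_atTop (hk : 0 < k) (hρ : ρ ∈ Set.Ioo (0:ℝ) 1) : Filter.Tendsto (gkr k ρ) Filter.atTop Filter.atTop := by
  have hle : (fun x => Real.exp (k * x) * stdPhiCDF 0 - 1) ≤ᶠ[Filter.atTop] gkr k ρ := by
    filter_upwards [Filter.eventually_ge_atTop (0:ℝ)] with x hx
    exact gkr_lower hk hρ x hx
  refine Filter.tendsto_atTop_mono' _ hle ?_
  apply Filter.tendsto_atTop_add_const_right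
  apply Filter.Tendsto.atTop_mul_const (stdPhiCDF_pos 0)
  exact Real.tendsto_exp_atTop.comp ((Filter.tendsto_const_mul_atTop_of_pos hk).2 Filter.tendsto_id)

lemma exp_mul_stdPhi_integrable (a : ℝ) : Integrable (fun s => Real.exp (a * s) * stdPhi s) := by
  have h : Integrable (fun x : ℝ => Real.exp (-(1/2 : ℝ) * x ^ 2)) :=
    integrable_exp_neg_mul_sq (by norm_num)
  have h2 := (h.comp_sub_right a).const_mul ((Real.sqrt (2 * Real.pi))⁻¹ * Real.exp (a ^ 2 / 2))
  have heq : ∀ s : ℝ, Real.exp (a * s) * stdPhi s =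
      (Real.sqrt (2 * Real.pi))⁻¹ * Real.exp (a ^ 2 / 2) * Real.exp (-(1/2 : ℝ) * (s - a) ^ 2) := by
    intro s
    unfold stdPhi
    rw [mul_left_comm, ← Real.exp_add, mul_assoc, ← Real.exp_add]
    congr 1
    ring
  exact (funext heq : _) ▸ h2

lemma gkr_upper (x : ℝ) : gkr k ρ x ≤ Real.exp (k * x + k ^ 2 * (1 - ρ ^ 2) / 2) := by
  unfold gkr
  have h1 := stdPhiCDF_nonneg (x / Real.sqrt (1 - ρ ^ 2))
  have h2 := stdPhiCDF_le_one ((x + k * (1 - ρ ^ 2)) / Real.sqrt (1 - ρ ^ 2))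
  nlinarith [Real.exp_pos (k * x + k ^ 2 * (1 - ρ ^ 2) / 2)]

lemma integrand_cont (hρ : ρ ∈ Set.Ioo (0:ℝ) 1) (p : ℝ) :
    Continuous (fun s => gkr k ρ (ρ * s - p) * stdPhi s) :=
  ((gkr_cont (k := k) (ρ := ρ)).comp (by fun_prop)).mul stdPhi_cont

lemma integrand_integrable (hk : 0 < k) (hρ : ρ ∈ Set.Ioo (0:ℝ) 1) (p : ℝ) :
    Integrable (fun s => gkr k ρ (ρ * s - p) * stdPhi s) := by
  set C := Real.exp (k * (-p) + k ^ 2 * (1 - ρ ^ 2) / 2) with hC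
  have hint : Integrable (fun s => C * (Real.exp (k * ρ * s) * stdPhi s)) :=
    (exp_mul_stdPhi_integrable (k * ρ)).const_mul C
  refine hint.mono' (integrand_cont hρ p).aestronglyMeasurable ?_
  refine Filter.Eventually.of_forall fun s => ?_
  rw [Real.norm_eq_abs, abs_of_nonneg (mul_nonneg (gkr_pos hk hρ _).le (stdPhi_pos s).le)]
  have h1 : gkr k ρ (ρ * s - p) ≤ C * Real.exp (k * ρ * s) := by
    have := gkr_upper (k := k) (ρ := ρ) (ρ * s - p)
    rw [hC, ← Real.exp_add]
    calc gkr k ρ (ρ * s - p) ≤ Real.exp (k * (ρ * s - p) + k ^ 2 * (1 - ρ ^ 2) / 2) := this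
      _ = Real.exp (k * -p + k ^ 2 * (1 - ρ ^ 2) / 2 + k * ρ * s) := by ring_nf
  calc gkr k ρ (ρ * s - p) * stdPhi s ≤ C * Real.exp (k * ρ * s) * stdPhi s :=
        mul_le_mul_of_nonneg_right h1 (stdPhi_pos s).le
    _ = C * (Real.exp (k * ρ * s) * stdPhi s) := by ring

lemma stdPhiCDF_neg_eq (t : ℝ) : stdPhiCDF (-t) = ∫ s in Ici t, stdPhi s := by
  unfold stdPhiCDF
  have h : ∀ u : ℝ, stdPhi u = stdPhi (-u) := by
    intro u; unfold stdPhi; rw [neg_pow]; norm_num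
  calc (∫ u in Iic (-t), stdPhi u) = ∫ u in Iic (-t), stdPhi (-u) := by
        exact setIntegral_congr_fun measurableSet_Iic fun u _ => h u
    _ = ∫ u in Ioi (t : ℝ), stdPhi u := by rw [integral_comp_neg_Iic, neg_neg]
    _ = ∫ s in Ici t, stdPhi s := (integral_Ici_eq_integral_Ioi).symm

lemma key_pos_Ico {a b : ℝ} (hab : a < b) (f : ℝ → ℝ) (hfi : IntegrableOn f (Ico a b))
    (hnonneg : ∀ s ∈ Ico a b, 0 ≤ f s) (hpos : ∀ s ∈ Ioo a b, 0 < f s) :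
    0 < ∫ s in Ico a b, f s := by
  rw [setIntegral_pos_iff_support_of_nonneg_ae
    ((ae_restrict_iff' measurableSet_Ico).2 (Filter.Eventually.of_forall hnonneg)) hfi]
  have hsub : Ioo a b ⊆ Function.support f ∩ Ico a b := fun s hs =>
    ⟨(hpos s hs).ne', Ioo_subset_Ico_self hs⟩
  calc (0:ENNReal) < volume (Ioo a b) := by
        rw [Real.volume_Ioo]; exact ENNReal.ofReal_pos.2 (by linarith)
    _ ≤ _ := measure_mono hsub

lemma key_pos_Ici {a : ℝ} (f : ℝ → ℝ) (hfi : IntegrableOn f (Ici a))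
    (hpos : ∀ s ∈ Ici a, 0 < f s) :
    0 < ∫ s in Ici a, f s := by
  rw [setIntegral_pos_iff_support_of_nonneg_ae
    ((ae_restrict_iff' measurableSet_Ici).2 (Filter.Eventually.of_forall fun s hs => (hpos s hs).le))
    hfi]
  have hsub : Ici a ⊆ Function.support f ∩ Ici a := fun s hs => ⟨(hpos s hs).ne', hs⟩
  calc (0:ENNReal) < volume (Ioi a) := by simp [Real.volume_Ioi]
    _ ≤ volume (Ici a) := measure_mono Ioi_subset_Ici_self
    _ ≤ _ := measure_mono hsub

lemma split_Ici {t t' : ℝ} (h : t ≤ t') (f : ℝ → ℝ) (hfi : Integrable f) :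
    ∫ s in Ici t, f s = (∫ s in Ico t t', f s) + ∫ s in Ici t', f s := by
  rw [← Ico_union_Ici_eq_Ici h, setIntegral_union ((Iio_disjoint_Ici le_rfl).mono_left Ico_subset_Iio_self) measurableSet_Ici
    hfi.integrableOn hfi.integrableOn]

/-- Free-entry residual `ℋ(p, t)`. -/
noncomputable def FEres (k ρ c₁ c₂ p t : ℝ) : ℝ :=
  (∫ s in Set.Ici t, gkr k ρ (ρ * s - p) * stdPhi s) - c₁ * stdPhiCDF (-t) - c₂

lemma FEres_diff (hk : 0 < k) (hρ : ρ ∈ Set.Ioo (0:ℝ) 1) (c₁ c₂ p : ℝ) {t t' : ℝ} (h : t ≤ t') :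
    FEres k ρ c₁ c₂ p t - FEres k ρ c₁ c₂ p t' =
      ∫ s in Ico t t', (gkr k ρ (ρ * s - p) - c₁) * stdPhi s := by
  unfold FEres
  rw [split_Ici h _ (integrand_integrable hk hρ p), stdPhiCDF_neg_eq t, stdPhiCDF_neg_eq t',
    split_Ici h _ stdPhi_integrable]
  have : ∫ s in Ico t t', (gkr k ρ (ρ * s - p) - c₁) * stdPhi s =
      (∫ s in Ico t t', gkr k ρ (ρ * s - p) * stdPhi s) - ∫ s in Ico t t', c₁ * stdPhi s := by
    rw [← integral_sub ((integrand_integrable hk hρ p).integrableOn)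
      ((stdPhi_integrable.const_mul c₁).integrableOn)]
    congr 1 with s
    ring
  rw [this, integral_const_mul]
  ring

lemma FEres_strict_max (hk : 0 < k) (hρ : ρ ∈ Set.Ioo (0:ℝ) 1) (c₁ c₂ p tstar : ℝ)
    (heq : gkr k ρ (ρ * tstar - p) = c₁) :
    ∀ t : ℝ, t ≠ tstar → FEres k ρ c₁ c₂ p t < FEres k ρ c₁ c₂ p tstar := by
  intro t ht
  rcases lt_or_gt_of_ne ht with hlt | hgt
  · have hdiff := FEres_diff hk hρ c₁ c₂ p hlt.le
    have hneg : ∫ s in Ico t tstar, (gkr k ρ (ρ * s - p) - c₁) * stdPhi s < 0 := by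
      have hpos : 0 < ∫ s in Ico t tstar, (c₁ - gkr k ρ (ρ * s - p)) * stdPhi s := by
        refine key_pos_Ico hlt _ ?_ ?_ ?_
        · have : (fun s => (c₁ - gkr k ρ (ρ * s - p)) * stdPhi s) =
              fun s => c₁ * stdPhi s - gkr k ρ (ρ * s - p) * stdPhi s := by
            funext s; ring
          rw [this]
          exact ((stdPhi_integrable.const_mul c₁).sub (integrand_integrable hk hρ p)).integrableOn
        · intro s hs
          have : gkr k ρ (ρ * s - p) ≤ c₁ := by
            rw [← heq]
            exact (gkr_strictMono hk hρ).le_iff_le.2 (by nlinarith [hρ.1, hs.2])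
          exact mul_nonneg (by linarith) (stdPhi_pos s).le
        · intro s hs
          have : gkr k ρ (ρ * s - p) < c₁ := by
            rw [← heq]
            exact gkr_strictMono hk hρ (by nlinarith [hρ.1, hs.2])
          exact mul_pos (by linarith) (stdPhi_pos s)
      have : ∫ s in Ico t tstar, (gkr k ρ (ρ * s - p) - c₁) * stdPhi s =
          -∫ s in Ico t tstar, (c₁ - gkr k ρ (ρ * s - p)) * stdPhi s := by
        rw [← integral_neg]
        congr 1 with s
        ring
      rw [this]
      linarith
    linarith
  · have hdiff := FEres_diff hk hρ c₁ c₂ p hgt.le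
    have hpos : 0 < ∫ s in Ico tstar t, (gkr k ρ (ρ * s - p) - c₁) * stdPhi s := by
      refine key_pos_Ico hgt _ ?_ ?_ ?_
      · have : (fun s => (gkr k ρ (ρ * s - p) - c₁) * stdPhi s) =
            fun s => gkr k ρ (ρ * s - p) * stdPhi s - c₁ * stdPhi s := by
          funext s; ring
        rw [this]
        exact ((integrand_integrable hk hρ p).sub (stdPhi_integrable.const_mul c₁)).integrableOn
      · intro s hs
        have : c₁ ≤ gkr k ρ (ρ * s - p) := by
          rw [← heq]
          exact (gkr_strictMono hk hρ).le_iff_le.2 (by nlinarith [hρ.1, hs.1])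
        exact mul_nonneg (by linarith) (stdPhi_pos s).le
      · intro s hs
        have : c₁ < gkr k ρ (ρ * s - p) := by
          rw [← heq]
          exact gkr_strictMono hk hρ (by nlinarith [hρ.1, hs.1])
        exact mul_pos (by linarith) (stdPhi_pos s)
    linarith

lemma H_strictAnti (hk : 0 < k) (hρ : ρ ∈ Set.Ioo (0:ℝ) 1) (c₁ c₂ x₁ : ℝ)
    (hgx₁ : gkr k ρ x₁ = c₁) :
    StrictAnti (fun t => FEres k ρ c₁ c₂ (ρ * t - x₁) t) := by
  intro t t' htt'
  simp only
  have h1 : 0 ≤ FEres k ρ c₁ c₂ (ρ * t - x₁) t - FEres k ρ c₁ c₂ (ρ * t - x₁) t' := by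
    rw [FEres_diff hk hρ c₁ c₂ _ htt'.le]
    refine setIntegral_nonneg measurableSet_Ico fun s hs => ?_
    have : c₁ ≤ gkr k ρ (ρ * s - (ρ * t - x₁)) := by
      rw [← hgx₁]
      exact (gkr_strictMono hk hρ).le_iff_le.2 (by nlinarith [hρ.1, hs.1])
    exact mul_nonneg (by linarith) (stdPhi_pos s).le
  have h2 : 0 < FEres k ρ c₁ c₂ (ρ * t - x₁) t' - FEres k ρ c₁ c₂ (ρ * t' - x₁) t' := by
    have heq : FEres k ρ c₁ c₂ (ρ * t - x₁) t' - FEres k ρ c₁ c₂ (ρ * t' - x₁) t' =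
        ∫ s in Ici t', (gkr k ρ (ρ * s - (ρ * t - x₁)) * stdPhi s -
          gkr k ρ (ρ * s - (ρ * t' - x₁)) * stdPhi s) := by
      unfold FEres
      rw [integral_sub ((integrand_integrable hk hρ _).integrableOn)
        ((integrand_integrable hk hρ _).integrableOn)]
      ring
    rw [heq]
    refine key_pos_Ici _ (((integrand_integrable hk hρ _).sub
      (integrand_integrable hk hρ _)).integrableOn) fun s _ => ?_
    have : gkr k ρ (ρ * s - (ρ * t' - x₁)) < gkr k ρ (ρ * s - (ρ * t - x₁)) :=
      gkr_strictMono hk hρ (by nlinarith [hρ.1])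
    have hφ := stdPhi_pos s
    nlinarith
  linarith

lemma H_continuous (hk : 0 < k) (hρ : ρ ∈ Set.Ioo (0:ℝ) 1) (c₁ c₂ x₁ : ℝ) :
    Continuous (fun t => FEres k ρ c₁ c₂ (ρ * t - x₁) t) := by
  have hJ : Continuous (fun t => ∫ s in Ici t, gkr k ρ (ρ * s - (ρ * t - x₁)) * stdPhi s) := by
    rw [continuous_iff_continuousAt]
    intro t₀
    have hrw : (fun t => ∫ s in Ici t, gkr k ρ (ρ * s - (ρ * t - x₁)) * stdPhi s) =
        fun t => ∫ s, (Ici t).indicator (fun s => gkr k ρ (ρ * s - (ρ * t - x₁)) * stdPhi s) s := by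
      funext t
      rw [integral_indicator measurableSet_Ici]
    rw [hrw]
    set C₀ := Real.exp (k * (ρ * (|t₀| + 1) + |x₁|) + k ^ 2 * (1 - ρ ^ 2) / 2) with hC₀
    refine continuousAt_of_dominated ?_ ?_ ?_ ?_
      (bound := fun s => C₀ * (Real.exp (k * ρ * s) * stdPhi s))
    · exact Filter.Eventually.of_forall fun t =>
        ((integrand_cont hρ _).aestronglyMeasurable).indicator measurableSet_Ici
    · filter_upwards [Metric.ball_mem_nhds t₀ one_pos] with t ht
      refine Filter.Eventually.of_forall fun s => ?_
      have hts : |t - t₀| < 1 := by simpa [Real.dist_eq] using ht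
      calc ‖(Ici t).indicator (fun s => gkr k ρ (ρ * s - (ρ * t - x₁)) * stdPhi s) s‖
          ≤ ‖gkr k ρ (ρ * s - (ρ * t - x₁)) * stdPhi s‖ := norm_indicator_le_norm_self _ s
        _ = gkr k ρ (ρ * s - (ρ * t - x₁)) * stdPhi s := by
            rw [Real.norm_eq_abs,
              abs_of_nonneg (mul_nonneg (gkr_pos hk hρ _).le (stdPhi_pos s).le)]
        _ ≤ C₀ * (Real.exp (k * ρ * s) * stdPhi s) := by
            have h1 : gkr k ρ (ρ * s - (ρ * t - x₁)) ≤
                Real.exp (k * (ρ * s - (ρ * t - x₁)) + k ^ 2 * (1 - ρ ^ 2) / 2) := gkr_upper _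
            have h2 : Real.exp (k * (ρ * s - (ρ * t - x₁)) + k ^ 2 * (1 - ρ ^ 2) / 2) ≤
                C₀ * Real.exp (k * ρ * s) := by
              rw [hC₀, ← Real.exp_add]
              apply Real.exp_le_exp.2
              have ht' : -t ≤ |t₀| + 1 := by
                have := abs_sub_abs_le_abs_sub t t₀
                have := neg_abs_le t
                linarith [abs_nonneg t, abs_sub_comm t t₀ ▸ hts]
              have h3 : k * (-(ρ * t)) ≤ k * (ρ * (|t₀| + 1)) := by
                apply mul_le_mul_of_nonneg_left _ hk.le
                rw [← mul_neg]
                exact mul_le_mul_of_nonneg_left ht' hρ.1.le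
              have h4 : k * x₁ ≤ k * |x₁| := mul_le_mul_of_nonneg_left (le_abs_self x₁) hk.le
              nlinarith
            calc gkr k ρ (ρ * s - (ρ * t - x₁)) * stdPhi s
                ≤ C₀ * Real.exp (k * ρ * s) * stdPhi s :=
                  mul_le_mul_of_nonneg_right (h1.trans h2) (stdPhi_pos s).le
              _ = C₀ * (Real.exp (k * ρ * s) * stdPhi s) := by ring
    · exact (exp_mul_stdPhi_integrable (k * ρ)).const_mul C₀
    · have hae : ∀ᵐ s : ℝ, s ≠ t₀ := by
        rw [ae_iff]
        simp only [not_ne_iff, Set.setOf_eq_eq_singleton]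
        exact measure_singleton t₀
      filter_upwards [hae] with s hs
      rcases lt_or_gt_of_ne hs with hlt | hgt
      -- s < t₀ : near t₀, s ∉ Ici t
      · have : (fun t => (Ici t).indicator
            (fun s => gkr k ρ (ρ * s - (ρ * t - x₁)) * stdPhi s) s) =ᶠ[nhds t₀] fun _ => 0 := by
          filter_upwards [IsOpen.mem_nhds isOpen_Ioi hlt] with t (ht : s < t)
          exact indicator_of_notMem (by simpa using ht.not_ge) _
        exact (continuousAt_const).congr this.symm
      · have : (fun t => (Ici t).indicator
            (fun s => gkr k ρ (ρ * s - (ρ * t - x₁)) * stdPhi s) s) =ᶠ[nhds t₀]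
            fun t => gkr k ρ (ρ * s - (ρ * t - x₁)) * stdPhi s := by
          filter_upwards [IsOpen.mem_nhds isOpen_Iio hgt] with t (ht : t < s)
          exact indicator_of_mem (by simpa using ht.le) _
        refine ContinuousAt.congr ?_ this.symm
        exact (((gkr_cont (k := k) (ρ := ρ)).comp (by fun_prop)).mul continuous_const).continuousAt
  unfold FEres
  exact (hJ.sub (continuous_const.mul (stdPhiCDF_cont.comp continuous_neg))).sub continuous_const

lemma H_tendsto_atTop (hk : 0 < k) (hρ : ρ ∈ Set.Ioo (0:ℝ) 1) (c₁ c₂ x₁ : ℝ) :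
    Filter.Tendsto (fun t => FEres k ρ c₁ c₂ (ρ * t - x₁) t) Filter.atTop (nhds (-c₂)) := by
  have hJ : Filter.Tendsto
      (fun t => ∫ s in Ici t, gkr k ρ (ρ * s - (ρ * t - x₁)) * stdPhi s)
      Filter.atTop (nhds 0) := by
    set M := ∫ s, Real.exp (k * ρ * s) * stdPhi s with hM
    have hMnonneg : 0 ≤ M :=
      integral_nonneg fun s => mul_nonneg (Real.exp_pos _).le (stdPhi_pos s).le
    have hub : ∀ t : ℝ, ∫ s in Ici t, gkr k ρ (ρ * s - (ρ * t - x₁)) * stdPhi s ≤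
        Real.exp (k * (x₁ - ρ * t) + k ^ 2 * (1 - ρ ^ 2) / 2) * M := by
      intro t
      calc (∫ s in Ici t, gkr k ρ (ρ * s - (ρ * t - x₁)) * stdPhi s)
          ≤ ∫ s in Ici t, Real.exp (k * (x₁ - ρ * t) + k ^ 2 * (1 - ρ ^ 2) / 2) *
            (Real.exp (k * ρ * s) * stdPhi s) := by
            refine setIntegral_mono_on ((integrand_integrable hk hρ _).integrableOn)
              (((exp_mul_stdPhi_integrable (k * ρ)).const_mul _).integrableOn)
              measurableSet_Ici fun s _ => ?_
            have h1 := gkr_upper (k := k) (ρ := ρ) (ρ * s - (ρ * t - x₁))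
            have h2 : Real.exp (k * (ρ * s - (ρ * t - x₁)) + k ^ 2 * (1 - ρ ^ 2) / 2) =
                Real.exp (k * (x₁ - ρ * t) + k ^ 2 * (1 - ρ ^ 2) / 2) * Real.exp (k * ρ * s) := by
              rw [← Real.exp_add]; ring_nf
            calc gkr k ρ (ρ * s - (ρ * t - x₁)) * stdPhi s
                ≤ Real.exp (k * (ρ * s - (ρ * t - x₁)) + k ^ 2 * (1 - ρ ^ 2) / 2) * stdPhi s :=
                  mul_le_mul_of_nonneg_right h1 (stdPhi_pos s).le
              _ = Real.exp (k * (x₁ - ρ * t) + k ^ 2 * (1 - ρ ^ 2) / 2) *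
                  (Real.exp (k * ρ * s) * stdPhi s) := by rw [h2]; ring
        _ ≤ Real.exp (k * (x₁ - ρ * t) + k ^ 2 * (1 - ρ ^ 2) / 2) * M := by
            rw [← integral_const_mul]
            refine setIntegral_le_integral ((exp_mul_stdPhi_integrable (k * ρ)).const_mul _)
              (Filter.Eventually.of_forall fun s => ?_)
            exact mul_nonneg (Real.exp_pos _).le
              (mul_nonneg (Real.exp_pos _).le (stdPhi_pos s).le)
    have hlb : ∀ t : ℝ, 0 ≤ ∫ s in Ici t, gkr k ρ (ρ * s - (ρ * t - x₁)) * stdPhi s := by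
      intro t
      exact setIntegral_nonneg measurableSet_Ici fun s _ =>
        mul_nonneg (gkr_pos hk hρ _).le (stdPhi_pos s).le
    have hbound : Filter.Tendsto
        (fun t : ℝ => Real.exp (k * (x₁ - ρ * t) + k ^ 2 * (1 - ρ ^ 2) / 2) * M)
        Filter.atTop (nhds 0) := by
      have : Filter.Tendsto (fun t : ℝ => Real.exp (k * (x₁ - ρ * t) + k ^ 2 * (1 - ρ ^ 2) / 2))
          Filter.atTop (nhds 0) := by
        apply Real.tendsto_exp_atBot.comp
        apply Filter.tendsto_atBot_add_const_right
        apply (Filter.tendsto_const_mul_atBot_of_pos hk).2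
        apply Filter.tendsto_atBot_add_const_left
        exact (Filter.tendsto_neg_atBot_iff).2 <|
          (Filter.tendsto_const_mul_atTop_of_pos hρ.1).2 Filter.tendsto_id
      simpa using this.mul_const M
    exact tendsto_of_tendsto_of_tendsto_of_le_of_le tendsto_const_nhds hbound hlb hub
  have hΦ : Filter.Tendsto (fun t : ℝ => stdPhiCDF (-t)) Filter.atTop (nhds 0) :=
    stdPhiCDF_tendsto_atBot.comp Filter.tendsto_neg_atTop_atBot
  have := (hJ.sub (hΦ.const_mul c₁)).sub (tendsto_const_nhds (x := c₂))
  simpa [FEres] using this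

lemma H_exists_pos (hk : 0 < k) (hρ : ρ ∈ Set.Ioo (0:ℝ) 1) (hc₁ : 0 < c₁) (hc₂ : 0 < c₂)
    (x₁ : ℝ) : ∃ t : ℝ, 0 < FEres k ρ c₁ c₂ (ρ * t - x₁) t := by
  obtain ⟨x, hx⟩ := ((gkr_tendsto_atTop hk hρ).eventually_gt_atTop
    ((c₁ + c₂ + 1) / stdPhi 1)).exists
  refine ⟨min 0 ((x₁ - x) / ρ), ?_⟩
  set t := min 0 ((x₁ - x) / ρ) with htdef
  have ht0 : t ≤ 0 := min_le_left _ _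
  have htx : x ≤ -(ρ * t) + x₁ := by
    have h1 : t ≤ (x₁ - x) / ρ := min_le_right _ _
    have h2 : t * ρ ≤ x₁ - x := (le_div_iff₀ hρ.1).1 h1
    nlinarith
  have hIcc : ∀ s ∈ Icc (0:ℝ) 1,
      gkr k ρ (-(ρ * t) + x₁) * stdPhi 1 ≤ gkr k ρ (ρ * s - (ρ * t - x₁)) * stdPhi s := by
    intro s hs
    have hg : gkr k ρ (-(ρ * t) + x₁) ≤ gkr k ρ (ρ * s - (ρ * t - x₁)) := by
      apply (gkr_strictMono hk hρ).le_iff_le.2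
      nlinarith [hρ.1, hs.1]
    have hφ : stdPhi 1 ≤ stdPhi s := by
      unfold stdPhi
      have : -s ^ 2 / 2 ≥ -(1:ℝ) ^ 2 / 2 := by nlinarith [hs.1, hs.2]
      exact mul_le_mul_of_nonneg_left (Real.exp_le_exp.2 (by linarith)) (by positivity)
    exact mul_le_mul hg hφ (stdPhi_pos 1).le (gkr_pos hk hρ _).le
  have hint : gkr k ρ (-(ρ * t) + x₁) * stdPhi 1 ≤
      ∫ s in Ici t, gkr k ρ (ρ * s - (ρ * t - x₁)) * stdPhi s := by
    have h1 : gkr k ρ (-(ρ * t) + x₁) * stdPhi 1 * (volume (Icc (0:ℝ) 1)).toReal ≤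
        ∫ s in Icc (0:ℝ) 1, gkr k ρ (ρ * s - (ρ * t - x₁)) * stdPhi s := by
      have h := setIntegral_ge_of_const_le_real measurableSet_Icc (by simp) hIcc
        ((integrand_integrable hk hρ _).integrableOn)
      exact h
    rw [Real.volume_Icc] at h1
    norm_num at h1
    refine h1.trans ?_
    refine setIntegral_mono_set ((integrand_integrable hk hρ _).integrableOn)
      (Filter.Eventually.of_forall fun s =>
        mul_nonneg (gkr_pos hk hρ _).le (stdPhi_pos s).le) ?_
    refine HasSubset.Subset.eventuallyLE fun s hs => ?_
    exact le_trans ht0 hs.1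
  have hΦ1 : c₁ * stdPhiCDF (-t) ≤ c₁ := by
    nth_rewrite 2 [← mul_one c₁]
    exact mul_le_mul_of_nonneg_left (stdPhiCDF_le_one _) hc₁.le
  have hbig : c₁ + c₂ + 1 < gkr k ρ (-(ρ * t) + x₁) * stdPhi 1 := by
    have hg : gkr k ρ x < gkr k ρ (-(ρ * t) + x₁) ∨ gkr k ρ x = gkr k ρ (-(ρ * t) + x₁) := by
      rcases lt_or_eq_of_le ((gkr_strictMono hk hρ).le_iff_le.2 htx) with h | h
      · exact Or.inl h
      · exact Or.inr h
    have hφ1 : 0 < stdPhi 1 := stdPhi_pos 1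
    have : (c₁ + c₂ + 1) / stdPhi 1 < gkr k ρ (-(ρ * t) + x₁) := by
      rcases hg with h | h
      · linarith [hx]
      · rw [← h]; exact hx
    calc c₁ + c₂ + 1 = (c₁ + c₂ + 1) / stdPhi 1 * stdPhi 1 := by field_simp
      _ < gkr k ρ (-(ρ * t) + x₁) * stdPhi 1 := by
          exact mul_lt_mul_of_pos_right this hφ1
  unfold FEres
  linarith

theorem equilibrium_exists_unique
    (k ρ c₁ c₂ : ℝ) (hk : 0 < k) (hρ : ρ ∈ Set.Ioo (0 : ℝ) 1)
    (hc₁ : 0 < c₁) (hc₂ : 0 < c₂) :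
    ∃ tstar pstar : ℝ,
      (gkr k ρ (ρ * tstar - pstar) = c₁ ∧ FEres k ρ c₁ c₂ pstar tstar = 0) ∧
      (∀ t p : ℝ,
        gkr k ρ (ρ * t - p) = c₁ → FEres k ρ c₁ c₂ p t = 0 → t = tstar ∧ p = pstar) ∧
      (∀ t : ℝ, t ≠ tstar → FEres k ρ c₁ c₂ pstar t < FEres k ρ c₁ c₂ pstar tstar) := by
  -- find x₁ with gkr x₁ = c₁
  obtain ⟨a, ha⟩ := ((gkr_tendsto_atBot hk hρ).eventually_lt_const hc₁).exists
  obtain ⟨b, hb⟩ := ((gkr_tendsto_atTop hk hρ).eventually_gt_atTop c₁).exists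
  have hab : a ≤ b := by
    by_contra h
    exact absurd ((gkr_strictMono hk hρ).le_iff_le.2 (le_of_not_ge h)) (by linarith)
  obtain ⟨x₁, -, hx₁⟩ := intermediate_value_Icc hab (gkr_cont (k := k) (ρ := ρ)).continuousOn
    ⟨ha.le, hb.le⟩
  -- find tstar with H tstar = 0
  obtain ⟨ta, hta⟩ := H_exists_pos hk hρ hc₁ hc₂ x₁
  obtain ⟨tb, htb⟩ := ((H_tendsto_atTop hk hρ c₁ c₂ x₁).eventually_lt_const
    (by linarith : -c₂ < 0)).exists
  have hanti := H_strictAnti hk hρ c₁ c₂ x₁ hx₁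
  have htab : ta ≤ tb := by
    by_contra h
    have := hanti.antitone (le_of_not_ge h)
    linarith
  obtain ⟨tstar, -, hts⟩ := intermediate_value_Icc' htab
    (H_continuous hk hρ c₁ c₂ x₁).continuousOn ⟨htb.le, hta.le⟩
  refine ⟨tstar, ρ * tstar - x₁, ⟨?_, hts⟩, ?_, ?_⟩
  · rw [show ρ * tstar - (ρ * tstar - x₁) = x₁ by ring, hx₁]
  · intro t p h1 h2
    have hx : ρ * t - p = x₁ := (gkr_strictMono hk hρ).injective (h1.trans hx₁.symm)
    have hp : p = ρ * t - x₁ := by linarith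
    have ht : t = tstar := by
      apply hanti.injective
      show FEres k ρ c₁ c₂ (ρ * t - x₁) t = FEres k ρ c₁ c₂ (ρ * tstar - x₁) tstar
      rw [← hp, h2]
      exact hts.symm
    exact ⟨ht, by rw [hp, ht]⟩
  · exact FEres_strict_max hk hρ c₁ c₂ _ tstar
      (by rw [show ρ * tstar - (ρ * tstar - x₁) = x₁ by ring, hx₁])
end

section
/- Fix k > 0, ρ ∈ (0,1), and t ∈ ℝ, and define 𝒦(p) := exp(k²/2 − k·p)·Φ_ρ(−p + k, −t + ρk) − Φ_ρ(−p, −t). Then 𝒦 is differentiable on ℝ with 𝒦′(p) = −k·exp(k²/2 − k·p)·Φ_ρ(−p + k, −t + ρk) < 0 for every p; in particular, 𝒦 is strictly decreasing in p. -/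
open MeasureTheory Real Set

/-- Standard bivariate normal density with correlation `ρ`. -/
noncomputable def biPdf (ρ x y : ℝ) : ℝ :=
  (2 * Real.pi * Real.sqrt (1 - ρ ^ 2))⁻¹ *
    Real.exp (-(x ^ 2 - 2 * ρ * x * y + y ^ 2) / (2 * (1 - ρ ^ 2)))

/-- Standard bivariate normal CDF with correlation `ρ`. -/
noncomputable def biCDF (ρ x y : ℝ) : ℝ :=
  ∫ u in Set.Iic x, ∫ v in Set.Iic y, biPdf ρ u v

/-- Free-entry expected-profit term `𝒦(p)`. -/
noncomputable def feProfit (k ρ t p : ℝ) : ℝ :=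
  Real.exp (k ^ 2 / 2 - k * p) * biCDF ρ (-p + k) (-t + ρ * k) - biCDF ρ (-p) (-t)

/- ### Auxiliary definitions and lemmas -/

/-- Conditional Gaussian density (centered, variance `1 - ρ²`). -/
noncomputable def gbAux (ρ w : ℝ) : ℝ :=
  (Real.sqrt (2 * Real.pi * (1 - ρ ^ 2)))⁻¹ * Real.exp (-w ^ 2 / (2 * (1 - ρ ^ 2)))

/-- CDF of `gbAux`. -/
noncomputable def GbAux (ρ z : ℝ) : ℝ := ∫ w in Set.Iic z, gbAux ρ w

/-- Partial (in the second variable) integral of the bivariate density. -/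
noncomputable def FyAux (ρ y u : ℝ) : ℝ := ∫ v in Set.Iic y, biPdf ρ u v

lemma biCDF_eq_FyAux (ρ x y : ℝ) : biCDF ρ x y = ∫ u in Set.Iic x, FyAux ρ y u := rfl

lemma setIntegral_Iic_shift (g : ℝ → ℝ) (c a : ℝ) :
    (∫ v in Iic c, g (v + a)) = ∫ w in Iic (c + a), g w := by
  have h := (measurePreserving_add_right volume a).setIntegral_preimage_emb
    (MeasurableEquiv.addRight a).measurableEmbedding g (Iic (c + a))
  rw [← h]
  congr 1
  ext w
  simp [MeasurableEquiv.addRight]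

section withRho

variable {ρ : ℝ} (hρ : ρ ∈ Set.Ioo (0 : ℝ) 1)
include hρ

lemma one_sub_sq_pos : 0 < 1 - ρ ^ 2 := by
  have h1 := hρ.1; have h2 := hρ.2; nlinarith

lemma biPdf_decomp (u v : ℝ) : biPdf ρ u v = stdPhi u * gbAux ρ (v - ρ * u) := by
  have hb : 0 < 1 - ρ ^ 2 := one_sub_sq_pos hρ
  have hπ : (0:ℝ) < 2 * Real.pi := by positivity
  unfold biPdf stdPhi gbAux
  rw [Real.sqrt_mul (le_of_lt hπ)]
  rw [mul_mul_mul_comm, ← mul_inv, ← Real.exp_add]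
  congr 1
  · congr 1
    rw [← mul_assoc, Real.mul_self_sqrt (le_of_lt hπ)]
  · field_simp
    ring

lemma gbAux_pos (w : ℝ) : 0 < gbAux ρ w := by
  have hb : 0 < 1 - ρ ^ 2 := one_sub_sq_pos hρ
  unfold gbAux
  positivity

omit hρ in
lemma gbAux_cont : Continuous (gbAux ρ) := by
  unfold gbAux
  fun_prop

lemma gbAux_integrable : Integrable (gbAux ρ) := by
  have hb : 0 < 1 - ρ ^ 2 := one_sub_sq_pos hρ
  unfold gbAux
  refine Integrable.const_mul ?_ _
  have : (fun w : ℝ => Real.exp (-w ^ 2 / (2 * (1 - ρ ^ 2))))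
      = fun w : ℝ => Real.exp (-((2 * (1 - ρ ^ 2))⁻¹) * w ^ 2) := by
    funext w; congr 1; field_simp
  rw [this]
  exact integrable_exp_neg_mul_sq (by positivity)

lemma GbAux_pos (z : ℝ) : 0 < GbAux ρ z := by
  rw [GbAux, setIntegral_pos_iff_support_of_nonneg_ae]
  · have : Function.support (gbAux ρ) = Set.univ := by
      ext w; simp [Function.mem_support, ne_of_gt (gbAux_pos hρ w)]
    rw [this, Set.univ_inter, Real.volume_Iic]
    exact ENNReal.zero_lt_top
  · exact Filter.Eventually.of_forall fun w => (gbAux_pos hρ w).le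
  · exact (gbAux_integrable hρ).integrableOn

lemma GbAux_le (z : ℝ) : GbAux ρ z ≤ ∫ w, gbAux ρ w :=
  setIntegral_le_integral (gbAux_integrable hρ)
    (Filter.Eventually.of_forall fun w => (gbAux_pos hρ w).le)

lemma GbAux_cont : Continuous (GbAux ρ) := by
  have hInt : ∀ a b : ℝ, IntervalIntegrable (gbAux ρ) volume a b :=
    fun a b => (gbAux_integrable hρ).intervalIntegrable
  have key : ∀ z : ℝ, GbAux ρ z = GbAux ρ 0 + ∫ w in (0:ℝ)..z, gbAux ρ w := by
    intro z
    have := intervalIntegral.integral_Iic_sub_Iic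
      ((gbAux_integrable hρ).integrableOn (s := Iic (0:ℝ)))
      ((gbAux_integrable hρ).integrableOn (s := Iic z))
    unfold GbAux
    linarith [this]
  have : Continuous fun z => GbAux ρ 0 + ∫ w in (0:ℝ)..z, gbAux ρ w :=
    continuous_const.add (intervalIntegral.continuous_primitive hInt 0)
  exact this.congr fun z => (key z).symm

lemma FyAux_eq (y u : ℝ) : FyAux ρ y u = stdPhi u * GbAux ρ (y - ρ * u) := by
  unfold FyAux
  have h1 : (∫ v in Iic y, biPdf ρ u v) = ∫ v in Iic y, stdPhi u * gbAux ρ (v - ρ * u) := by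
    apply setIntegral_congr_fun measurableSet_Iic
    intro v _; exact biPdf_decomp hρ u v
  rw [h1, integral_const_mul]
  congr 1
  have := setIntegral_Iic_shift (gbAux ρ) y (-(ρ * u))
  simpa [sub_eq_add_neg, GbAux] using this

lemma FyAux_pos (y u : ℝ) : 0 < FyAux ρ y u := by
  rw [FyAux_eq hρ]
  have : 0 < stdPhi u := by unfold stdPhi; positivity
  exact mul_pos this (GbAux_pos hρ _)

lemma FyAux_cont (y : ℝ) : Continuous (FyAux ρ y) := by
  have : Continuous fun u => stdPhi u * GbAux ρ (y - ρ * u) := by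
    apply Continuous.mul
    · unfold stdPhi; fun_prop
    · exact (GbAux_cont hρ).comp (by fun_prop)
  exact this.congr fun u => (FyAux_eq hρ y u).symm

lemma FyAux_integrable (y : ℝ) : Integrable (FyAux ρ y) := by
  have hstd : Integrable stdPhi := by
    unfold stdPhi
    refine Integrable.const_mul ?_ _
    have : (fun x : ℝ => Real.exp (-x ^ 2 / 2))
        = fun x : ℝ => Real.exp (-(2:ℝ)⁻¹ * x ^ 2) := by
      funext x; congr 1; ring
    rw [this]
    exact integrable_exp_neg_mul_sq (by norm_num)
  have hbdd : Integrable fun u => (fun u => GbAux ρ (y - ρ * u)) u * stdPhi u := by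
    refine hstd.bdd_mul (c := ∫ w, gbAux ρ w) ?_ (Filter.Eventually.of_forall fun u => ?_)
    · exact ((GbAux_cont hρ).comp (by fun_prop)).aestronglyMeasurable
    · rw [Real.norm_eq_abs, abs_of_nonneg (GbAux_pos hρ _).le]
      exact GbAux_le hρ _
  have : Integrable fun u => stdPhi u * GbAux ρ (y - ρ * u) := by
    simpa [mul_comm] using hbdd
  exact this.congr (Filter.Eventually.of_forall fun u => (FyAux_eq hρ y u).symm)

lemma hasDerivAt_biCDF_fst (y x : ℝ) :
    HasDerivAt (fun x => biCDF ρ x y) (FyAux ρ y x) x := by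
  have hint : Integrable (FyAux ρ y) := FyAux_integrable hρ y
  have key : ∀ z : ℝ, biCDF ρ z y
      = (∫ u in Iic (0:ℝ), FyAux ρ y u) + ∫ u in (0:ℝ)..z, FyAux ρ y u := by
    intro z
    have := intervalIntegral.integral_Iic_sub_Iic
      (hint.integrableOn (s := Iic (0:ℝ))) (hint.integrableOn (s := Iic z))
    rw [biCDF_eq_FyAux]
    linarith [this]
  have hd : HasDerivAt
      (fun z => (∫ u in Iic (0:ℝ), FyAux ρ y u) + ∫ u in (0:ℝ)..z, FyAux ρ y u)
      (FyAux ρ y x) x := by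
    refine HasDerivAt.const_add _ ?_
    exact intervalIntegral.integral_hasDerivAt_right hint.intervalIntegrable
      ((FyAux_cont hρ y).stronglyMeasurable.stronglyMeasurableAtFilter)
      (FyAux_cont hρ y).continuousAt
  exact hd.congr_of_eventuallyEq (Filter.Eventually.of_forall fun z => key z)

lemma biCDF_pos (x y : ℝ) : 0 < biCDF ρ x y := by
  rw [biCDF_eq_FyAux, setIntegral_pos_iff_support_of_nonneg_ae]
  · have : Function.support (FyAux ρ y) = Set.univ := by
      ext u; simp [Function.mem_support, ne_of_gt (FyAux_pos hρ y u)]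
    rw [this, Set.univ_inter, Real.volume_Iic]
    exact ENNReal.zero_lt_top
  · exact Filter.Eventually.of_forall fun u => (FyAux_pos hρ y u).le
  · exact (FyAux_integrable hρ y).integrableOn

lemma tilting (k t p : ℝ) :
    Real.exp (k ^ 2 / 2 - k * p) * FyAux ρ (-t + ρ * k) (-p + k) = FyAux ρ (-t) (-p) := by
  have hb : 0 < 1 - ρ ^ 2 := one_sub_sq_pos hρ
  have hshift : FyAux ρ (-t + ρ * k) (-p + k)
      = ∫ w in Iic (-t), biPdf ρ (-p + k) (w + ρ * k) := by
    unfold FyAux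
    rw [setIntegral_Iic_shift (biPdf ρ (-p + k)) (-t) (ρ * k)]
  rw [hshift, ← integral_const_mul]
  unfold FyAux
  apply setIntegral_congr_fun measurableSet_Iic
  intro w _
  simp only [biPdf]
  rw [mul_left_comm, ← Real.exp_add]
  congr 2
  field_simp
  ring

end withRho

theorem feProfit_deriv_neg_strictAnti
    (k ρ t : ℝ) (hk : 0 < k) (hρ : ρ ∈ Set.Ioo (0 : ℝ) 1) :
    (∀ p : ℝ,
      HasDerivAt (feProfit k ρ t)
        (-(k * Real.exp (k ^ 2 / 2 - k * p) * biCDF ρ (-p + k) (-t + ρ * k))) p ∧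
      -(k * Real.exp (k ^ 2 / 2 - k * p) * biCDF ρ (-p + k) (-t + ρ * k)) < 0) ∧
    StrictAnti (feProfit k ρ t) := by
  have hmain : ∀ p : ℝ,
      HasDerivAt (feProfit k ρ t)
        (-(k * Real.exp (k ^ 2 / 2 - k * p) * biCDF ρ (-p + k) (-t + ρ * k))) p := by
    intro p
    -- inner affine maps
    have hinner1 : HasDerivAt (fun p : ℝ => -p + k) (-1) p := by
      simpa using (hasDerivAt_id p).neg.add_const k
    have hinner2 : HasDerivAt (fun p : ℝ => -p) (-1) p := (hasDerivAt_id p).neg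
    -- exp factor
    have hexp : HasDerivAt (fun p : ℝ => Real.exp (k ^ 2 / 2 - k * p))
        (-k * Real.exp (k ^ 2 / 2 - k * p)) p := by
      have h1 : HasDerivAt (fun p : ℝ => k ^ 2 / 2 - k * p) (-k) p := by
        simpa using ((hasDerivAt_id p).const_mul k).const_sub (k ^ 2 / 2)
      simpa [mul_comm] using h1.exp
    -- biCDF compositions
    have hB : HasDerivAt (fun p : ℝ => biCDF ρ (-p + k) (-t + ρ * k))
        (FyAux ρ (-t + ρ * k) (-p + k) * (-1)) p :=
      by have := (hasDerivAt_biCDF_fst hρ (-t + ρ * k) (-p + k)).comp p hinner1; exact this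
    have hC : HasDerivAt (fun p : ℝ => biCDF ρ (-p) (-t))
        (FyAux ρ (-t) (-p) * (-1)) p :=
      (hasDerivAt_biCDF_fst hρ (-t) (-p)).comp p hinner2
    have hprod := (hexp.mul hB).sub hC
    have heq : -k * Real.exp (k ^ 2 / 2 - k * p) * biCDF ρ (-p + k) (-t + ρ * k) +
          Real.exp (k ^ 2 / 2 - k * p) * (FyAux ρ (-t + ρ * k) (-p + k) * (-1)) -
          FyAux ρ (-t) (-p) * (-1)
        = -(k * Real.exp (k ^ 2 / 2 - k * p) * biCDF ρ (-p + k) (-t + ρ * k)) := by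
      have := tilting hρ k t p
      nlinarith [this]
    rw [heq] at hprod
    exact hprod
  have hneg : ∀ p : ℝ,
      -(k * Real.exp (k ^ 2 / 2 - k * p) * biCDF ρ (-p + k) (-t + ρ * k)) < 0 := by
    intro p
    have h1 : 0 < biCDF ρ (-p + k) (-t + ρ * k) := biCDF_pos hρ _ _
    have h2 : 0 < Real.exp (k ^ 2 / 2 - k * p) := Real.exp_pos _
    have := mul_pos (mul_pos hk h2) h1
    linarith
  refine ⟨fun p => ⟨hmain p, hneg p⟩, ?_⟩
  apply strictAnti_of_deriv_neg
  intro p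
  rw [(hmain p).deriv]
  exact hneg p
end
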